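/- With c the leading coefficient of F and α_n = log(F(x_n)/(c·x_n^d)), one has 0 ≤ α_n ≤ (F(1) − c)/(c·x_n) for all n ≥ 1; in particular α_n → 0 as n → ∞. -/

import Mathlib

open Filter

/-- with `c` the leading coefficient of `F` and
`α n = log (F(x n) / (c * x n ^ d))`, one has `0 ≤ α n ≤ (F(1) - c) / (c * x n)` for all
`n ≥ 1`; in particular `α n → 0` as `n → ∞`. -/
theorem stmt_14 (F : Polynomial ℤ)
    (hFnonneg : ∀ i, 0 ≤ F.coeff i) (hF0 : F.coeff 0 = 1) (hFdeg : 1 ≤ F.natDegree)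
    (x : ℕ → ℚ) (hxpos : ∀ n, 0 < x n) (hx0 : x 0 = 1) (hx1 : x 1 = 1)
    (hrec : ∀ n, x (n + 2) * x n = (x (n + 1)) ^ 2 * Polynomial.aeval (x (n + 1)) F)
    (c : ℤ) (hc : c = F.leadingCoeff)
    (α : ℕ → ℝ)
    (hα : ∀ n, α n = Real.log ((Polynomial.aeval (x n) F : ℚ) /
      ((c : ℚ) * x n ^ F.natDegree))) :
    (∀ n : ℕ, 1 ≤ n →
      0 ≤ α n ∧ α n ≤ ((F.eval 1 : ℤ) - (c : ℤ)) / ((c : ℝ) * (x n : ℝ))) ∧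
    Tendsto α atTop (nhds 0) := by
  set d := F.natDegree with hd
  have hFne : F ≠ 0 := fun h => by simp [h] at hF0
  have hcoeffd : F.coeff d = c := by rw [hc, hd]; exact Polynomial.coeff_natDegree
  have hcpos : (0 : ℤ) < c := by
    rcases lt_or_eq_of_le (hFnonneg d) with h | h
    · rw [hcoeffd] at h; exact h
    · exfalso; rw [hcoeffd] at h
      exact (Polynomial.leadingCoeff_ne_zero.mpr hFne) (hc ▸ h.symm)
  have hsum : ∀ q : ℚ, Polynomial.aeval q F
      = ∑ i ∈ Finset.range (d + 1), (F.coeff i : ℚ) * q ^ i := by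
    intro q
    rw [Polynomial.aeval_eq_sum_range]
    simp [zsmul_eq_mul]
    rfl
  -- F(1)
  have heval1 : (F.eval 1 : ℤ) = (∑ i ∈ Finset.range d, F.coeff i) + c := by
    rw [Polynomial.eval_eq_sum_range, Finset.sum_range_succ]
    simp [hcoeffd]
    rw [← hc]
  have hKnonneg : (0 : ℤ) ≤ F.eval 1 - c := by
    rw [heval1]
    have : (0 : ℤ) ≤ ∑ i ∈ Finset.range d, F.coeff i :=
      Finset.sum_nonneg fun i _ => hFnonneg i
    linarith
  -- lower bound 1 + c q^d ≤ F(q)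
  have hone : ∀ q : ℚ, 1 ≤ q → 1 + (c : ℚ) * q ^ d ≤ Polynomial.aeval q F := by
    intro q hq
    rw [hsum q]
    have hsub : ({0, d} : Finset ℕ) ⊆ Finset.range (d + 1) := by
      intro i hi
      simp only [Finset.mem_insert, Finset.mem_singleton] at hi
      rcases hi with h | h <;> simp [h]
    have h0d : (0 : ℕ) ≠ d := by omega
    have hpair : ∑ i ∈ ({0, d} : Finset ℕ), (F.coeff i : ℚ) * q ^ i
        = 1 + (c : ℚ) * q ^ d := by
      rw [Finset.sum_pair h0d]
      simp [hF0, hcoeffd]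
    rw [← hpair]
    refine Finset.sum_le_sum_of_subset_of_nonneg hsub ?_
    intro i _ _
    have h1 : (0 : ℚ) ≤ (F.coeff i : ℚ) := by exact_mod_cast hFnonneg i
    have h2 : (0 : ℚ) ≤ q ^ i := pow_nonneg (by linarith) i
    exact mul_nonneg h1 h2
  have hlow : ∀ q : ℚ, 1 ≤ q → (c : ℚ) * q ^ d ≤ Polynomial.aeval q F := by
    intro q hq; linarith [hone q hq]
  have hup : ∀ q : ℚ, 1 ≤ q →
      Polynomial.aeval q F ≤ (c : ℚ) * q ^ d + (((F.eval 1 : ℤ) : ℚ) - c) * q ^ (d - 1) := by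
    intro q hq
    rw [hsum q, Finset.sum_range_succ, hcoeffd]
    have hKq : (((F.eval 1 : ℤ) : ℚ) - c) = ∑ i ∈ Finset.range d, (F.coeff i : ℚ) := by
      have := heval1
      push_cast [this]
      ring
    have hterm : ∀ i ∈ Finset.range d, (F.coeff i : ℚ) * q ^ i
        ≤ (F.coeff i : ℚ) * q ^ (d - 1) := by
      intro i hi
      have hi' : i ≤ d - 1 := by
        simp only [Finset.mem_range] at hi; omega
      have := pow_le_pow_right₀ hq hi'
      have hcoe : (0 : ℚ) ≤ (F.coeff i : ℚ) := by exact_mod_cast hFnonneg i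
      exact mul_le_mul_of_nonneg_left this hcoe
    calc ∑ i ∈ Finset.range d, (F.coeff i : ℚ) * q ^ i + (c : ℚ) * q ^ d
        ≤ ∑ i ∈ Finset.range d, (F.coeff i : ℚ) * q ^ (d - 1) + (c : ℚ) * q ^ d :=
          add_le_add (Finset.sum_le_sum hterm) le_rfl
      _ = (c : ℚ) * q ^ d + (((F.eval 1 : ℤ) : ℚ) - c) * q ^ (d - 1) := by
          rw [hKq, ← Finset.sum_mul]; ring
  -- sequence facts
  have hseq : ∀ n, 1 ≤ x n ∧ x n ≤ x (n + 1) := by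
    intro n
    induction n with
    | zero => exact ⟨le_of_eq hx0.symm, by rw [hx0, hx1]⟩
    | succ n ih =>
      have h1 : 1 ≤ x (n + 1) := le_trans ih.1 ih.2
      refine ⟨h1, ?_⟩
      have hF2 : (1 : ℚ) ≤ Polynomial.aeval (x (n + 1)) F := by
        have := hone (x (n + 1)) h1
        have hpow : (0 : ℚ) ≤ (c : ℚ) * x (n + 1) ^ d := by
          have hc' : (0 : ℚ) ≤ (c : ℚ) := by exact_mod_cast hcpos.le
          exact mul_nonneg hc' (pow_nonneg (by linarith) d)
        linarith
      have hr := hrec n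
      have key : x (n + 1) * x n ≤ x (n + 2) * x n := by
        rw [hr]
        nlinarith [hxpos n, hxpos (n + 1), ih.1, ih.2]
      exact le_of_mul_le_mul_right key (hxpos n)
  have hgrow : ∀ n, 2 * x (n + 2) ≤ x (n + 3) := by
    intro n
    have h1 : 1 ≤ x (n + 1) := (hseq (n + 1)).1
    have h2 : x (n + 1) ≤ x (n + 2) := (hseq (n + 1)).2
    have h3 : 1 ≤ x (n + 2) := le_trans h1 h2
    have hF2 : (2 : ℚ) ≤ Polynomial.aeval (x (n + 2)) F := by
      have := hone (x (n + 2)) h3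
      have hc' : (1 : ℚ) ≤ (c : ℚ) := by exact_mod_cast hcpos
      have hpow : (1 : ℚ) ≤ x (n + 2) ^ d := one_le_pow₀ h3
      nlinarith
    have hr := hrec (n + 1)
    have key : 2 * x (n + 2) * x (n + 1) ≤ x (n + 3) * x (n + 1) := by
      rw [hr]
      nlinarith [hxpos (n + 1), hxpos (n + 2)]
    exact le_of_mul_le_mul_right key (hxpos (n + 1))
  have hpow2 : ∀ n : ℕ, (2 : ℚ) ^ n ≤ x (n + 2) := by
    intro n
    induction n with
    | zero => simpa using (hseq 1).1.trans (hseq 1).2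
    | succ n ih =>
      have := hgrow n
      calc (2 : ℚ) ^ (n + 1) = 2 * 2 ^ n := by ring
        _ ≤ 2 * x (n + 2) := by linarith
        _ ≤ x (n + 3) := this
  -- main bound, for all n
  have main : ∀ n, 0 ≤ α n ∧
      α n ≤ ((F.eval 1 : ℤ) - (c : ℤ)) / ((c : ℝ) * (x n : ℝ)) := by
    intro n
    have hq1 : 1 ≤ x n := (hseq n).1
    have hq0 : (0 : ℚ) < x n := hxpos n
    have hcq : (0 : ℚ) < (c : ℚ) := by exact_mod_cast hcpos
    have hs : (0 : ℚ) < (c : ℚ) * x n ^ d := by positivity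
    have hPlow := hlow (x n) hq1
    have hPup := hup (x n) hq1
    have hr1 : (1 : ℚ) ≤ Polynomial.aeval (x n) F / ((c : ℚ) * x n ^ d) :=
      (one_le_div hs).mpr hPlow
    -- ratio upper bound in ℚ
    have hqd : (x n : ℚ) ^ d = x n ^ (d - 1) * x n := by
      rw [← pow_succ]
      congr 1
      omega
    have hr2 : Polynomial.aeval (x n) F / ((c : ℚ) * x n ^ d)
        ≤ 1 + (((F.eval 1 : ℤ) : ℚ) - c) / ((c : ℚ) * x n) := by
      rw [div_le_iff₀ hs]
      have hexp : (1 + (((F.eval 1 : ℤ) : ℚ) - c) / ((c : ℚ) * x n)) * ((c : ℚ) * x n ^ d)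
          = (c : ℚ) * x n ^ d + (((F.eval 1 : ℤ) : ℚ) - c) * x n ^ (d - 1) := by
        field_simp
        rw [hqd]
        ring
      rw [hexp]
      exact hPup
    constructor
    · rw [hα n]
      apply Real.log_nonneg
      exact_mod_cast hr1
    · rw [hα n]
      have hargpos : (0 : ℝ) < ((Polynomial.aeval (x n) F : ℚ) : ℝ)
          / ((c : ℝ) * (x n : ℝ) ^ d) := by
        have : (1 : ℝ) ≤ ((Polynomial.aeval (x n) F : ℚ) : ℝ)
            / ((c : ℝ) * (x n : ℝ) ^ d) := by exact_mod_cast hr1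
        linarith
      have hr2' : ((Polynomial.aeval (x n) F : ℚ) : ℝ) / ((c : ℝ) * (x n : ℝ) ^ d)
          ≤ 1 + (((F.eval 1 : ℤ) : ℝ) - (c : ℝ)) / ((c : ℝ) * (x n : ℝ)) := by
        exact_mod_cast hr2
      have hlog1 := Real.log_le_log hargpos hr2'
      have hpos2 : (0 : ℝ) < 1 + (((F.eval 1 : ℤ) : ℝ) - (c : ℝ)) / ((c : ℝ) * (x n : ℝ)) := by
        have hnum : (0 : ℝ) ≤ ((F.eval 1 : ℤ) : ℝ) - (c : ℝ) := by exact_mod_cast hKnonneg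
        have hden : (0 : ℝ) < (c : ℝ) * (x n : ℝ) := by
          have h1 : (0 : ℝ) < (c : ℝ) := by exact_mod_cast hcpos
          have h2 : (0 : ℝ) < ((x n : ℚ) : ℝ) := by exact_mod_cast hq0
          positivity
        positivity
      have hlog2 := Real.log_le_sub_one_of_pos hpos2
      calc Real.log (((Polynomial.aeval (x n) F : ℚ) : ℝ) / ((c : ℝ) * (x n : ℝ) ^ d))
          ≤ Real.log (1 + (((F.eval 1 : ℤ) : ℝ) - (c : ℝ)) / ((c : ℝ) * (x n : ℝ))) := hlog1
        _ ≤ (((F.eval 1 : ℤ) : ℝ) - (c : ℝ)) / ((c : ℝ) * (x n : ℝ)) := by linarith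
  constructor
  · exact fun n _ => main n
  · -- tendsto
    have hxtop : Tendsto (fun n => ((x n : ℚ) : ℝ)) atTop atTop := by
      rw [← tendsto_add_atTop_iff_nat 2]
      refine tendsto_atTop_mono (fun n => ?_)
        (tendsto_pow_atTop_atTop_of_one_lt (by norm_num : (1 : ℝ) < 2))
      have := hpow2 n
      exact_mod_cast this
    have hcx : Tendsto (fun n => (c : ℝ) * ((x n : ℚ) : ℝ)) atTop atTop := by
      apply Tendsto.const_mul_atTop (by exact_mod_cast hcpos : (0 : ℝ) < (c : ℝ)) hxtop
    have hg : Tendsto (fun n => (((F.eval 1 : ℤ) : ℝ) - (c : ℝ)) / ((c : ℝ) * ((x n : ℚ) : ℝ)))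
        atTop (nhds 0) := Tendsto.div_atTop tendsto_const_nhds hcx
    exact squeeze_zero (fun n => (main n).1) (fun n => (main n).2) hg
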